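/- Let {f_k} (k ≥ 1) be a frame for a separable Hilbert space H such that f_k = T^{k-1} f_1 for a bounded operator T : H → H. Then the kernel of the synthesis operator U : ℓ²(ℕ) → H, U{c_k} = ∑_k c_k f_k, is invariant under the right-shift operator 𝒯{c_1, c_2, ...} = {0, c_1, c_2, ...}. -/
import Mathlib


open scoped ComplexInnerProductSpace

/-- A sequence `f` in a Hilbert space is a frame if there exist constants
`A, B > 0` with `A‖x‖² ≤ ∑ᵢ |⟨x, f i⟩|² ≤ B‖x‖²` for all `x`. -/
def IsFrame {ι H : Type*} [NormedAddCommGroup H] [InnerProductSpace ℂ H] (f : ι → H) : Prop :=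
  ∃ A B : ℝ, 0 < A ∧ 0 < B ∧ ∀ x : H,
    A * ‖x‖ ^ 2 ≤ ∑' i, ‖⟪x, f i⟫‖ ^ 2 ∧ ∑' i, ‖⟪x, f i⟫‖ ^ 2 ≤ B * ‖x‖ ^ 2

/-- If a frame `{f_k}` is represented as `f_k = T^k f_0` for a bounded operator `T`,
then the kernel of the synthesis operator is invariant under the right shift, i.e.
whenever `{c_k} ∈ ℓ²` and `∑ c_k f_k = 0`, also `∑ c_k f_{k+1} = 0`. -/
theorem stmt1 {H : Type*} [NormedAddCommGroup H] [InnerProductSpace ℂ H] [CompleteSpace H]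
    [TopologicalSpace.SeparableSpace H]
    (f : ℕ → H) (T : H →L[ℂ] H)
    (hf : IsFrame f) (hrep : ∀ k, f k = (T ^ k) (f 0)) :
    ∀ c : ℕ → ℂ, Summable (fun k => ‖c k‖ ^ 2) →
      HasSum (fun k => c k • f k) (0 : H) → HasSum (fun k => c k • f (k + 1)) (0 : H) := by
  intro c _ hsum
  have h := hsum.mapL T
  simp only [map_zero] at h
  convert h using 2 with k
  rw [hrep k, hrep (k+1), map_smul, pow_succ']
  rfl
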